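/- arXiv:2411.06593 — 2 statements merged into one kernel-verified Lean document; each statement's English description precedes it below -/
import Mathlib

section
/- Let W ∈ ℝ^{n×q} have full row rank (rank(W) = n < q), T ∈ ℝ^{n×m} have full column rank (rank(T) = m < n), and y ∈ ℝⁿ. Fix i ∈ {1,…,n}; let W_{∼i}, T_{∼i}, y_{∼i} denote the data with the i-th row/entry removed, and assume T_{∼i} has full column rank. Let τ̂^{(∼i)} := ((W_{∼i})† T_{∼i})† (W_{∼i})† y_{∼i} be the partially regularized leave-i-out OLS estimate of the unpenalized coefficients. Define W̃_i := P⊥_{W†e_i} W†, where P_{W†e_i} = (W† e_i e_iᵀ W†ᵀ)/(e_iᵀ G_W e_i). Then τ̂^{(∼i)} = (W̃_i T)† W̃_i y. -/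
open Matrix BigOperators

noncomputable section

/-- `B` is the Moore–Penrose pseudoinverse of `A`. -/
def IsMPInv {m n : Type*} [Fintype m] [Fintype n]
    (A : Matrix m n ℝ) (B : Matrix n m ℝ) : Prop :=
  A * B * A = A ∧ B * A * B = B ∧ (A * B)ᵀ = A * B ∧ (B * A)ᵀ = B * A

/-- Remove the `i`-th row of a matrix. -/
def dropRow {n q : ℕ} (A : Matrix (Fin (n + 1)) (Fin q) ℝ) (i : Fin (n + 1)) :
    Matrix (Fin n) (Fin q) ℝ :=
  Matrix.of fun j k => A (i.succAbove j) k

/-- Remove the `i`-th entry of a vector. -/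
def dropEntry {n : ℕ} (v : Fin (n + 1) → ℝ) (i : Fin (n + 1)) : Fin n → ℝ :=
  fun j => v (i.succAbove j)

/-! ### Auxiliary lemmas -/

/-- Uniqueness of the Moore–Penrose pseudoinverse. -/
lemma mp_unique {k l : Type*} [Fintype k] [Fintype l] {A : Matrix k l ℝ} {B C : Matrix l k ℝ}
    (hB : IsMPInv A B) (hC : IsMPInv A C) : B = C := by
  obtain ⟨hB1, hB2, hB3, hB4⟩ := hB
  obtain ⟨hC1, hC2, hC3, hC4⟩ := hC
  have hA : Aᵀ = Aᵀ * Cᵀ * Aᵀ := by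
    conv_lhs => rw [← hC1]
    simp [transpose_mul, Matrix.mul_assoc]
  have e1 : A * B = A * C := by
    calc A * B = Bᵀ * Aᵀ := by rw [← transpose_mul, hB3]
    _ = Bᵀ * (Aᵀ * Cᵀ * Aᵀ) := by rw [← hA]
    _ = (Bᵀ * Aᵀ) * (Cᵀ * Aᵀ) := by simp only [Matrix.mul_assoc]
    _ = (A * B) * (A * C) := by rw [← transpose_mul, ← transpose_mul, hB3, hC3]
    _ = ((A * B) * A) * C := by simp only [Matrix.mul_assoc]
    _ = A * C := by rw [hB1]
  have e2 : B * A = C * A := by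
    calc B * A = Aᵀ * Bᵀ := by rw [← transpose_mul, hB4]
    _ = (Aᵀ * Cᵀ * Aᵀ) * Bᵀ := by rw [← hA]
    _ = (Aᵀ * Cᵀ) * (Aᵀ * Bᵀ) := by simp only [Matrix.mul_assoc]
    _ = (C * A) * (B * A) := by rw [← transpose_mul, ← transpose_mul, hC4, hB4]
    _ = C * ((A * B) * A) := by simp only [Matrix.mul_assoc]
    _ = C * A := by rw [hB1]
  calc B = B * A * B := hB2.symm
  _ = (C * A) * B := by rw [e2]
  _ = C * (A * B) := by rw [Matrix.mul_assoc]
  _ = C * (A * C) := by rw [e1]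
  _ = C * A * C := by rw [Matrix.mul_assoc]
  _ = C := hC2

lemma mul_vmv {k l o : Type*} [Fintype l] (M : Matrix k l ℝ) (u : l → ℝ) (v : o → ℝ) :
    M * vecMulVec u v = vecMulVec (M *ᵥ u) v := by
  ext a b
  simp [mul_apply, vecMulVec_apply, mulVec, dotProduct, Finset.sum_mul, mul_assoc]

lemma vmv_mul {k l o : Type*} [Fintype l] (u : k → ℝ) (v : l → ℝ) (M : Matrix l o ℝ) :
    vecMulVec u v * M = vecMulVec u (v ᵥ* M) := by
  ext a b
  simp [mul_apply, vecMulVec_apply, vecMul, dotProduct, Finset.mul_sum, mul_assoc]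

lemma vmv_transpose {k l : Type*} (u : k → ℝ) (v : l → ℝ) :
    (vecMulVec u v)ᵀ = vecMulVec v u := by
  ext a b; simp [vecMulVec_apply, mul_comm]

lemma vmv_mulVec {k l : Type*} [Fintype l] (u : k → ℝ) (v : l → ℝ) (w : l → ℝ) :
    vecMulVec u v *ᵥ w = (v ⬝ᵥ w) • u := by
  ext a
  simp only [mulVec, vecMulVec_apply, dotProduct, Pi.smul_apply, smul_eq_mul, Finset.sum_mul]
  exact Finset.sum_congr rfl fun x _ => by ring

lemma vmv_zero_left {k l : Type*} (v : l → ℝ) : vecMulVec (0 : k → ℝ) v = 0 := by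
  ext a b; simp [vecMulVec_apply]

/-- The row-deletion matrix. -/
def dropMat {n : ℕ} (i : Fin (n + 1)) : Matrix (Fin n) (Fin (n + 1)) ℝ :=
  Matrix.of fun j k => if i.succAbove j = k then 1 else 0

lemma dropMat_mul {n q : ℕ} (i : Fin (n + 1)) (A : Matrix (Fin (n + 1)) (Fin q) ℝ) :
    dropMat i * A = dropRow A i := by
  ext j l
  simp [mul_apply, dropMat, dropRow, ite_mul, Finset.sum_ite_eq]

lemma dropMat_mulVec {n : ℕ} (i : Fin (n + 1)) (v : Fin (n + 1) → ℝ) :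
    dropMat i *ᵥ v = dropEntry v i := by
  ext j
  simp [mulVec, dropMat, dropEntry, dotProduct, ite_mul, Finset.sum_ite_eq]

lemma dropMat_mul_transpose {n : ℕ} (i : Fin (n + 1)) :
    dropMat i * (dropMat i)ᵀ = 1 := by
  ext j j'
  simp only [mul_apply, dropMat, transpose_apply, of_apply, ite_mul, Matrix.one_mul, zero_mul]
  rw [Finset.sum_ite_eq Finset.univ (i.succAbove j)]
  simp [Fin.succAbove_right_inj, one_apply, eq_comm]

lemma sum_ite_succAbove {n : ℕ} (i k : Fin (n + 1)) :
    (∑ j : Fin n, if i.succAbove j = k then (1:ℝ) else 0) = if k = i then 0 else 1 := by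
  rcases eq_or_ne k i with rfl | h
  · simp [Fin.succAbove_ne]
  · obtain ⟨j0, rfl⟩ := Fin.exists_succAbove_eq h
    have e : ∀ j : Fin n, (if i.succAbove j = i.succAbove j0 then (1:ℝ) else 0)
        = if j = j0 then 1 else 0 := fun j => by simp [Fin.succAbove_right_inj]
    rw [Finset.sum_congr rfl fun j _ => e j, Finset.sum_ite_eq']
    simp [h]

lemma transpose_mul_dropMat {n : ℕ} (i : Fin (n + 1)) :
    (dropMat i)ᵀ * dropMat i
      = 1 - vecMulVec (Pi.single i (1:ℝ)) (Pi.single i 1) := by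
  ext k k'
  simp only [mul_apply, dropMat, transpose_apply, of_apply, Matrix.sub_apply, vecMulVec_apply]
  rcases eq_or_ne k k' with rfl | hkk
  · have e : ∀ j : Fin n, (if i.succAbove j = k then (1:ℝ) else 0) *
        (if i.succAbove j = k then (1:ℝ) else 0) = if i.succAbove j = k then 1 else 0 :=
      fun j => by split <;> simp
    rw [Finset.sum_congr rfl fun j _ => e j, sum_ite_succAbove]
    rcases eq_or_ne k i with rfl | h2
    · simp [Pi.single_apply, one_apply]
    · simp [Pi.single_apply, one_apply, h2]
  · have e : ∀ j : Fin n, (if i.succAbove j = k then (1:ℝ) else 0) *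
        (if i.succAbove j = k' then (1:ℝ) else 0) = 0 := fun j => by
      split_ifs <;> simp_all
    rw [Finset.sum_congr rfl fun j _ => e j, Finset.sum_const_zero]
    rcases eq_or_ne k i with rfl | h3
    · simp [one_apply, hkk, Pi.single_eq_of_ne (Ne.symm hkk)]
    · simp [one_apply, hkk, Pi.single_eq_of_ne h3]

/-- A square real matrix of full rank is a unit. -/
lemma isUnit_of_rank_eq_card {k : ℕ} (A : Matrix (Fin k) (Fin k) ℝ) (h : A.rank = k) :
    IsUnit A := by
  rw [← Matrix.mulVec_surjective_iff_isUnit]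
  have hr : LinearMap.range A.mulVecLin = ⊤ := by
    apply Submodule.eq_top_of_finrank_eq
    rw [show Module.finrank ℝ (LinearMap.range A.mulVecLin) = A.rank from rfl, h,
      Module.finrank_fintype_fun_eq_card, Fintype.card_fin]
  intro v
  obtain ⟨w, hw⟩ := (LinearMap.range_eq_top).mp hr v
  exact ⟨w, hw⟩

theorem loo_tau_formula
    {n q m : ℕ}
    (W : Matrix (Fin (n + 1)) (Fin q) ℝ) (T : Matrix (Fin (n + 1)) (Fin m) ℝ)
    (y : Fin (n + 1) → ℝ)
    (hW : W.rank = n + 1) (hnq : n + 1 < q)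
    (hT : T.rank = m) (hmn : m < n + 1)
    (i : Fin (n + 1))
    (hTd : (dropRow T i).rank = m)
    (Wp : Matrix (Fin q) (Fin (n + 1)) ℝ) (hWp : IsMPInv W Wp)
    (GW : Matrix (Fin (n + 1)) (Fin (n + 1)) ℝ) (hGW : IsMPInv (W * Wᵀ) GW)
    (Wdp : Matrix (Fin q) (Fin n) ℝ) (hWdp : IsMPInv (dropRow W i) Wdp)
    (L : Matrix (Fin m) (Fin q) ℝ) (hL : IsMPInv (Wdp * dropRow T i) L)
    -- τ̂^{(∼i)} = ((W_{∼i})† T_{∼i})† (W_{∼i})† y_{∼i}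
    (tau : Fin m → ℝ) (htau : tau = L *ᵥ (Wdp *ᵥ dropEntry y i))
    -- `W̃_i = P⊥_{W†e_i} W†` with `P_{W†e_i} = (W† e_i e_iᵀ W†ᵀ)/(e_iᵀ G_W e_i)`
    (Wt : Matrix (Fin q) (Fin (n + 1)) ℝ)
    (hWt : Wt = ((1 : Matrix (Fin q) (Fin q) ℝ)
      - (GW i i)⁻¹ • vecMulVec (Wpᵀ i) (Wpᵀ i)) * Wp)
    (K : Matrix (Fin m) (Fin q) ℝ) (hK : IsMPInv (Wt * T) K) :
    tau = K *ᵥ (Wt *ᵥ y) := by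
  -- invertibility of W * Wᵀ
  have hAunit : IsUnit (W * Wᵀ) := by
    apply isUnit_of_rank_eq_card
    rw [rank_self_mul_transpose, hW]
  have hdet : IsUnit (W * Wᵀ).det := (Matrix.isUnit_iff_isUnit_det _).mp hAunit
  have hGeq : GW = (W * Wᵀ)⁻¹ := by
    calc GW = ((W * Wᵀ)⁻¹ * (W * Wᵀ)) * GW * ((W * Wᵀ) * (W * Wᵀ)⁻¹) := by
          rw [Matrix.nonsing_inv_mul _ hdet, Matrix.mul_nonsing_inv _ hdet, Matrix.one_mul, Matrix.mul_one]
    _ = (W * Wᵀ)⁻¹ * ((W * Wᵀ) * GW * (W * Wᵀ)) * (W * Wᵀ)⁻¹ := by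
          simp only [Matrix.mul_assoc]
    _ = (W * Wᵀ)⁻¹ * (W * Wᵀ) * (W * Wᵀ)⁻¹ := by rw [hGW.1]
    _ = (W * Wᵀ)⁻¹ := by rw [Matrix.nonsing_inv_mul _ hdet, Matrix.one_mul]
  have hGA : GW * (W * Wᵀ) = 1 := by rw [hGeq]; exact Matrix.nonsing_inv_mul _ hdet
  have hAG : (W * Wᵀ) * GW = 1 := by rw [hGeq]; exact Matrix.mul_nonsing_inv _ hdet
  -- W has a right inverse
  have hWWp : W * Wp = 1 := by
    calc W * Wp = (W * Wp) * ((W * Wᵀ) * GW) := by rw [hAG, Matrix.mul_one]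
    _ = ((W * Wp * W) * Wᵀ) * GW := by simp only [Matrix.mul_assoc]
    _ = (W * Wᵀ) * GW := by rw [hWp.1, Matrix.mul_assoc]
    _ = 1 := hAG
  -- Wp in closed form and Wpᵀ * Wp = GW
  have h5 : Wp = Wᵀ * (Wpᵀ * Wp) := by
    calc Wp = Wp * W * Wp := hWp.2.1.symm
    _ = (Wp * W)ᵀ * Wp := by rw [hWp.2.2.2]
    _ = Wᵀ * (Wpᵀ * Wp) := by rw [transpose_mul, Matrix.mul_assoc]
  have h6 : (W * Wᵀ) * (Wpᵀ * Wp) = 1 := by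
    calc (W * Wᵀ) * (Wpᵀ * Wp) = W * (Wᵀ * (Wpᵀ * Wp)) := by rw [Matrix.mul_assoc]
    _ = W * Wp := by rw [← h5]
    _ = 1 := hWWp
  have h7 : Wpᵀ * Wp = GW := by
    calc Wpᵀ * Wp = (GW * (W * Wᵀ)) * (Wpᵀ * Wp) := by rw [hGA, Matrix.one_mul]
    _ = GW * ((W * Wᵀ) * (Wpᵀ * Wp)) := by rw [Matrix.mul_assoc]
    _ = GW := by rw [h6, Matrix.mul_one]
  -- the vector u = W† e_i
  set u : Fin q → ℝ := Wpᵀ i with hu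
  have hu_col : Wp *ᵥ Pi.single i 1 = u := by
    ext k
    simp [Matrix.mulVec_single, hu, transpose_apply]
  have hWu : W *ᵥ u = Pi.single i 1 := by
    rw [← hu_col, Matrix.mulVec_mulVec, hWWp, Matrix.one_mulVec]
  have hg_dot : GW i i = u ⬝ᵥ u := by
    rw [← h7]
    simp [mul_apply, dotProduct, hu, transpose_apply]
  have hg : GW i i ≠ 0 := by
    intro h0
    have hu0 : u = 0 := dotProduct_self_eq_zero.mp (by rw [← hg_dot, h0])
    have : W *ᵥ u = 0 := by rw [hu0, Matrix.mulVec_zero]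
    rw [hWu] at this
    have := congrFun this i
    simp at this
  -- notation
  set g : ℝ := GW i i with hgdef
  set P : Matrix (Fin q) (Fin q) ℝ := g⁻¹ • vecMulVec u u with hP
  set D : Matrix (Fin n) (Fin (n + 1)) ℝ := dropMat i with hD
  set e : Fin (n + 1) → ℝ := Pi.single i 1 with he
  -- W * Wt
  have hWWt : W * Wt = 1 - g⁻¹ • vecMulVec e (u ᵥ* Wp) := by
    rw [hWt, ← Matrix.mul_assoc, Matrix.mul_sub, Matrix.mul_one, Matrix.sub_mul, hWWp, hP,
      Matrix.mul_smul, Matrix.smul_mul, mul_vmv, hWu, vmv_mul]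
  -- column i of Wt vanishes
  have hWte : Wt *ᵥ e = 0 := by
    rw [hWt, Matrix.sub_mul, Matrix.one_mul, Matrix.sub_mulVec, hu_col]
    have : (P * Wp) *ᵥ e = u := by
      rw [← Matrix.mulVec_mulVec, hu_col, hP, Matrix.smul_mulVec, vmv_mulVec,
        ← hg_dot, smul_smul, inv_mul_cancel₀ hg, one_smul]
    rw [this, sub_self]
  -- the candidate pseudoinverse of the dropped matrix
  set B : Matrix (Fin q) (Fin n) ℝ := Wt * Dᵀ with hB
  have hAB : dropRow W i * B = 1 := by
    rw [← dropMat_mul i W, ← hD, hB]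
    calc D * W * (Wt * Dᵀ) = D * (W * Wt) * Dᵀ := by simp only [Matrix.mul_assoc]
    _ = D * (1 - g⁻¹ • vecMulVec e (u ᵥ* Wp)) * Dᵀ := by rw [hWWt]
    _ = (D - g⁻¹ • (D * vecMulVec e (u ᵥ* Wp))) * Dᵀ := by
          rw [Matrix.mul_sub, Matrix.mul_one, Matrix.mul_smul]
    _ = (D - g⁻¹ • vecMulVec (D *ᵥ e) (u ᵥ* Wp)) * Dᵀ := by rw [mul_vmv]
    _ = D * Dᵀ := by
          have : D *ᵥ e = 0 := by
            rw [hD, he, dropMat_mulVec]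
            ext j
            simp [dropEntry, Pi.single_eq_of_ne (Fin.succAbove_ne i j)]
          rw [this, vmv_zero_left, smul_zero, sub_zero]
    _ = 1 := by rw [hD, dropMat_mul_transpose]
  have hBA : B * dropRow W i = Wp * W - P := by
    rw [← dropMat_mul i W, ← hD, hB]
    calc Wt * Dᵀ * (D * W) = Wt * (Dᵀ * D) * W := by simp only [Matrix.mul_assoc]
    _ = Wt * (1 - vecMulVec e e) * W := by rw [hD, transpose_mul_dropMat, ← he]
    _ = (Wt - vecMulVec (Wt *ᵥ e) e) * W := by rw [Matrix.mul_sub, Matrix.mul_one, mul_vmv]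
    _ = Wt * W := by rw [hWte, vmv_zero_left, sub_zero]
    _ = Wp * W - P * (Wp * W) := by
          rw [hWt, Matrix.mul_assoc, Matrix.sub_mul, Matrix.one_mul]
    _ = Wp * W - P := by
          have huWpW : u ᵥ* (Wp * W) = u := by
            rw [← Matrix.mulVec_transpose, hWp.2.2.2, ← Matrix.mulVec_mulVec, hWu, hu_col]
          rw [hP, Matrix.smul_mul, vmv_mul, huWpW]
  have hBmp : IsMPInv (dropRow W i) B := by
    refine ⟨?_, ?_, ?_, ?_⟩
    · rw [hAB, Matrix.one_mul]
    · rw [Matrix.mul_assoc, hAB, Matrix.mul_one]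
    · rw [hAB, transpose_one]
    · rw [hBA, transpose_sub, hWp.2.2.2, hP, transpose_smul, vmv_transpose]
  have hWdpB : Wdp = B := mp_unique hWdp hBmp
  -- Wt = Wdp * D
  have hWtD : Wt = Wdp * D := by
    rw [hWdpB, hB, Matrix.mul_assoc, hD, transpose_mul_dropMat, ← he,
      Matrix.mul_sub, Matrix.mul_one, mul_vmv, hWte, vmv_zero_left, sub_zero]
  have hWtT : Wt * T = Wdp * dropRow T i := by
    rw [hWtD, Matrix.mul_assoc, hD, dropMat_mul]
  have hK' : IsMPInv (Wdp * dropRow T i) K := by rw [← hWtT]; exact hK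
  have hLK : L = K := mp_unique hL hK'
  have hWty : Wt *ᵥ y = Wdp *ᵥ dropEntry y i := by
    rw [hWtD, ← Matrix.mulVec_mulVec, hD, dropMat_mulVec]
  rw [htau, hLK, hWty]
end
end

section
/- Let W ∈ ℝ^{n×q} have full row rank (rank(W) = n < q) and T ∈ ℝ^{n×m} have full column rank (rank(T) = m < n). Assume the Gauss–Markov model: y = Xβ + ε with X = [W, T] fixed, β ∈ ℝᵖ deterministic, and ε a random vector with E[ε] = 0 and E[ε εᵀ] = σ² I_n. Let β̂_{Wᶜ} := (W† T)† W† y be the partially regularized unpenalized-block estimate, assume tr(P⊥_{W†T} G_W) > 0, and define σ̂²_{Wᶜ} := ‖W† y − W† T β̂_{Wᶜ}‖₂² / tr(P⊥_{W†T} G_W). Then E[σ̂²_{Wᶜ}] = σ² + ‖P⊥_{W†T} W† E[y]‖₂² / tr(P⊥_{W†T} G_W), where E[y] = Xβ. -/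
open Matrix BigOperators MeasureTheory

noncomputable section

lemma IsMPInv.unique {m n : Type*} [Fintype m] [Fintype n]
    {A : Matrix m n ℝ} {B C : Matrix n m ℝ}
    (hB : IsMPInv A B) (hC : IsMPInv A C) : B = C := by
  obtain ⟨hB1, hB2, hB3, hB4⟩ := hB
  obtain ⟨hC1, hC2, hC3, hC4⟩ := hC
  have hAB : A * B = A * C := by
    calc A * B = (A * B)ᵀ := hB3.symm
      _ = Bᵀ * Aᵀ := by rw [Matrix.transpose_mul]
      _ = Bᵀ * (A * C * A)ᵀ := by rw [hC1]
      _ = Bᵀ * (Aᵀ * (A * C)ᵀ) := by rw [Matrix.transpose_mul]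
      _ = Bᵀ * Aᵀ * (A * C) := by rw [hC3, Matrix.mul_assoc]
      _ = (A * B)ᵀ * (A * C) := by rw [Matrix.transpose_mul]
      _ = A * B * (A * C) := by rw [hB3]
      _ = A * B * A * C := by simp only [Matrix.mul_assoc]
      _ = A * C := by rw [hB1]
  have hBA : B * A = C * A := by
    calc B * A = (B * A)ᵀ := hB4.symm
      _ = Aᵀ * Bᵀ := by rw [Matrix.transpose_mul]
      _ = (A * C * A)ᵀ * Bᵀ := by rw [hC1]
      _ = (C * A)ᵀ * Aᵀ * Bᵀ := by rw [Matrix.mul_assoc A C A, Matrix.transpose_mul A (C * A)]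
      _ = C * A * Aᵀ * Bᵀ := by rw [hC4]
      _ = C * A * (B * A)ᵀ := by rw [Matrix.mul_assoc (C * A), ← Matrix.transpose_mul]
      _ = C * A * (B * A) := by rw [hB4]
      _ = C * (A * B * A) := by rw [Matrix.mul_assoc, ← Matrix.mul_assoc A B A]
      _ = C * A := by rw [hB1]
  calc B = B * A * B := hB2.symm
    _ = C * A * B := by rw [hBA]
    _ = C * (A * B) := by rw [Matrix.mul_assoc]
    _ = C * (A * C) := by rw [hAB]
    _ = C * A * C := by rw [Matrix.mul_assoc]
    _ = C := hC2

lemma gram_mp {n q : Type*} [Fintype n] [Fintype q] [DecidableEq q]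
    {W : Matrix n q ℝ} {Wp : Matrix q n ℝ} (h : IsMPInv W Wp) :
    IsMPInv (Wᵀ * W) (Wp * Wpᵀ) := by
  obtain ⟨h1, h2, h3, h4⟩ := h
  have key1 : Wpᵀ * Wᵀ = W * Wp := by rw [← Matrix.transpose_mul, h3]
  have key2 : Wᵀ * W * (Wp * Wpᵀ) = Wp * W := by
    calc Wᵀ * W * (Wp * Wpᵀ) = Wᵀ * (W * Wp) * Wpᵀ := by
          rw [Matrix.mul_assoc, Matrix.mul_assoc, Matrix.mul_assoc]
      _ = Wᵀ * (Wpᵀ * Wᵀ) * Wpᵀ := by rw [key1]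
      _ = (Wp * W * Wp * W)ᵀ := by
          simp only [Matrix.transpose_mul, Matrix.mul_assoc]
      _ = (Wp * W)ᵀ := by rw [h2]
      _ = Wp * W := h4
  have key3 : (Wp * Wpᵀ) * (Wᵀ * W) = Wp * W := by
    calc Wp * Wpᵀ * (Wᵀ * W) = Wp * (Wpᵀ * Wᵀ) * W := by
          rw [Matrix.mul_assoc, Matrix.mul_assoc, Matrix.mul_assoc]
      _ = Wp * (W * Wp) * W := by rw [key1]
      _ = Wp * W * Wp * W := by rw [← Matrix.mul_assoc Wp W Wp]
      _ = Wp * W := by rw [h2]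
  refine ⟨?_, ?_, ?_, ?_⟩
  · have hWpWtW : Wpᵀ * (Wᵀ * W) = W := by
      rw [← Matrix.mul_assoc, key1, h1]
    calc Wᵀ * W * (Wp * Wpᵀ) * (Wᵀ * W) = Wp * W * (Wᵀ * W) := by rw [key2]
      _ = (Wp * W)ᵀ * (Wᵀ * W) := by rw [h4]
      _ = Wᵀ * (Wpᵀ * (Wᵀ * W)) := by rw [Matrix.transpose_mul, Matrix.mul_assoc]
      _ = Wᵀ * W := by rw [hWpWtW]
  · calc Wp * Wpᵀ * (Wᵀ * W) * (Wp * Wpᵀ) = Wp * W * (Wp * Wpᵀ) := by rw [key3]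
      _ = Wp * W * Wp * Wpᵀ := by rw [Matrix.mul_assoc (Wp * W)]
      _ = Wp * Wpᵀ := by rw [h2]
  · rw [key2, h4]
  · rw [key3, h4]

theorem variance_estimator_unpenalized_block
    {n q m : ℕ} {Ω : Type*} [MeasurableSpace Ω]
    (μ : Measure Ω) [IsProbabilityMeasure μ]
    (W : Matrix (Fin n) (Fin q) ℝ) (T : Matrix (Fin n) (Fin m) ℝ)
    (hW : W.rank = n) (hnq : n < q)
    (hT : T.rank = m) (hmn : m < n)
    -- Gauss–Markov model: y = Xβ + ε with X = [W, T] fixed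
    (β : Fin q ⊕ Fin m → ℝ) (σ2 : ℝ) (hσ2 : 0 ≤ σ2)
    (ε : Ω → Fin n → ℝ)
    (hint1 : ∀ i, Integrable (fun ω => ε ω i) μ)
    (hint2 : ∀ i j, Integrable (fun ω => ε ω i * ε ω j) μ)
    (hmean : ∀ i, ∫ ω, ε ω i ∂μ = 0)
    (hcov : ∀ i j, ∫ ω, ε ω i * ε ω j ∂μ = if i = j then σ2 else 0)
    (y : Ω → Fin n → ℝ)
    (hy : ∀ ω, y ω = (Matrix.fromCols W T) *ᵥ β + ε ω)
    -- pseudoinverses `Wp = W†` and `K = (W† T)†` (so `P⊥_{W†T} = I_q − (W†T)(W†T)†`),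
    -- and the inverse Gram matrix `GWq = (Wᵀ W)† = W† (W†)ᵀ` appearing in the trace
    (Wp : Matrix (Fin q) (Fin n) ℝ) (hWp : IsMPInv W Wp)
    (K : Matrix (Fin m) (Fin q) ℝ) (hK : IsMPInv (Wp * T) K)
    (GWq : Matrix (Fin q) (Fin q) ℝ) (hGWq : IsMPInv (Wᵀ * W) GWq)
    -- the normalization tr(P⊥_{W†T} G_W)
    (tr : ℝ)
    (htr : tr = ((((1 : Matrix (Fin q) (Fin q) ℝ) - (Wp * T) * K) * GWq)).trace)
    (htrpos : 0 < tr)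
    -- β̂_{Wᶜ} = (W† T)† W† y
    (βWc : Ω → Fin m → ℝ) (hβWc : ∀ ω, βWc ω = K *ᵥ (Wp *ᵥ y ω)) :
    -- E[σ̂²_{Wᶜ}] = σ² + ‖P⊥_{W†T} W† E[y]‖₂² / tr(P⊥_{W†T} G_W), with
    -- σ̂²_{Wᶜ} = ‖W† y − W† T β̂_{Wᶜ}‖₂² / tr(P⊥_{W†T} G_W) and E[y] = Xβ
    ∫ ω, (∑ j, ((Wp *ᵥ y ω) j - ((Wp * T) *ᵥ βWc ω) j) ^ 2) / tr ∂μ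
      = σ2 + (∑ j, ((((1 : Matrix (Fin q) (Fin q) ℝ) - (Wp * T) * K)
          *ᵥ (Wp *ᵥ ((Matrix.fromCols W T) *ᵥ β))) j) ^ 2) / tr := by
  have htr0 : tr ≠ 0 := ne_of_gt htrpos
  set P : Matrix (Fin q) (Fin q) ℝ := 1 - (Wp * T) * K with hP
  set A : Matrix (Fin q) (Fin n) ℝ := P * Wp with hA
  set c : Fin n → ℝ := (Matrix.fromCols W T) *ᵥ β with hc
  set a : Fin q → ℝ := A *ᵥ c with ha
  -- projection properties
  obtain ⟨k1, k2, k3, k4⟩ := hK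
  have hPsymm : Pᵀ = P := by
    simp [hP, Matrix.transpose_sub, Matrix.transpose_one, k3]
  have hQQ : ((Wp * T) * K) * ((Wp * T) * K) = (Wp * T) * K := by
    rw [← Matrix.mul_assoc, Matrix.mul_assoc ((Wp * T)) K (Wp * T), ← Matrix.mul_assoc (Wp * T) K (Wp * T), k1]
  have hPP : P * P = P := by
    have : P * P = 1 - (Wp * T) * K - (Wp * T) * K + ((Wp * T) * K) * ((Wp * T) * K) := by
      simp only [hP]; noncomm_ring
    rw [this, hQQ, hP]; noncomm_ring
  -- GWq = Wp * Wpᵀ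
  have hG : GWq = Wp * Wpᵀ := IsMPInv.unique hGWq (gram_mp hWp)
  -- trace identity: ∑∑ A j k ^ 2 = tr
  have hS : ∑ j, ∑ k, (A j k) ^ 2 = tr := by
    have e1 : ∑ j, ∑ k, (A j k) ^ 2 = (A * Aᵀ).trace := by
      simp [Matrix.trace, Matrix.diag, Matrix.mul_apply, sq]
    have e2 : A * Aᵀ = P * (Wp * Wpᵀ) * P := by
      rw [hA, Matrix.transpose_mul, hPsymm]
      simp only [Matrix.mul_assoc]
    have e3 : (P * (Wp * Wpᵀ) * P).trace = (P * (Wp * Wpᵀ)).trace := by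
      rw [Matrix.trace_mul_comm, ← Matrix.mul_assoc, hPP]
    rw [e1, e2, e3, htr, hG]
  -- key integral computation
  have key : ∀ (b : ℝ) (v : Fin n → ℝ),
      Integrable (fun ω => (b + ∑ k, v k * ε ω k) ^ 2) μ ∧
      ∫ ω, (b + ∑ k, v k * ε ω k) ^ 2 ∂μ = b ^ 2 + σ2 * ∑ k, (v k) ^ 2 := by
    intro b v
    have hexp : ∀ ω, (b + ∑ k, v k * ε ω k) ^ 2
        = b ^ 2 + (2 * b) * (∑ k, v k * ε ω k)
          + ∑ k, ∑ l, (v k * v l) * (ε ω k * ε ω l) := by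
      intro ω
      have hs : (∑ k, v k * ε ω k) * (∑ l, v l * ε ω l)
          = ∑ k, ∑ l, (v k * v l) * (ε ω k * ε ω l) := by
        rw [Finset.sum_mul_sum]
        exact Finset.sum_congr rfl fun k _ => Finset.sum_congr rfl fun l _ => by ring
      rw [← hs]; ring
    have hig1 : Integrable (fun ω => ∑ k, v k * ε ω k) μ :=
      integrable_finset_sum _ fun k _ => (hint1 k).const_mul (v k)
    have hig2 : Integrable (fun ω => ∑ k, ∑ l, (v k * v l) * (ε ω k * ε ω l)) μ :=
      integrable_finset_sum _ fun k _ =>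
        integrable_finset_sum _ fun l _ => (hint2 k l).const_mul (v k * v l)
    have h12 : Integrable (fun ω => b ^ 2 + (2 * b) * (∑ k, v k * ε ω k)) μ :=
      by simpa using (integrable_const (b ^ 2) (μ := μ)).add (hig1.const_mul (2 * b))
    have higa : Integrable (fun ω => b ^ 2 + (2 * b) * (∑ k, v k * ε ω k)
        + ∑ k, ∑ l, (v k * v l) * (ε ω k * ε ω l)) μ := h12.add hig2
    constructor
    · exact higa.congr (Filter.Eventually.of_forall fun ω => (hexp ω).symm)
    · have : ∫ ω, (b + ∑ k, v k * ε ω k) ^ 2 ∂μ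
          = ∫ ω, (b ^ 2 + (2 * b) * (∑ k, v k * ε ω k)
            + ∑ k, ∑ l, (v k * v l) * (ε ω k * ε ω l)) ∂μ :=
        integral_congr_ae (Filter.Eventually.of_forall fun ω => hexp ω)
      rw [this, integral_add h12 hig2,
        integral_add (integrable_const _) (hig1.const_mul (2 * b))]
      have i1 : ∫ ω, (2 * b) * (∑ k, v k * ε ω k) ∂μ = 0 := by
        rw [integral_const_mul, integral_finset_sum _ fun k _ => (hint1 k).const_mul (v k)]
        simp only [integral_const_mul, hmean, mul_zero, Finset.sum_const_zero]
      have i2 : ∫ ω, (∑ k, ∑ l, (v k * v l) * (ε ω k * ε ω l)) ∂μ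
          = σ2 * ∑ k, (v k) ^ 2 := by
        rw [integral_finset_sum _ fun k _ =>
          integrable_finset_sum _ fun l _ => (hint2 k l).const_mul (v k * v l)]
        have : ∀ k, ∫ ω, (∑ l, (v k * v l) * (ε ω k * ε ω l)) ∂μ = (v k) ^ 2 * σ2 := by
          intro k
          rw [integral_finset_sum _ fun l _ => (hint2 k l).const_mul (v k * v l)]
          have : ∀ l, ∫ ω, (v k * v l) * (ε ω k * ε ω l) ∂μ
              = (v k * v l) * (if k = l then σ2 else 0) := by
            intro l; rw [integral_const_mul, hcov]
          simp only [this, mul_ite, mul_zero]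
          rw [Finset.sum_ite_eq (Finset.univ) k (fun l => v k * v l * σ2)]
          simp [sq, mul_assoc]
        simp only [this]
        rw [Finset.mul_sum]
        exact Finset.sum_congr rfl fun k _ => mul_comm _ _
      rw [i1, i2, integral_const]
      simp
  -- rewrite the integrand
  have hvec : ∀ ω j, (Wp *ᵥ y ω) j - ((Wp * T) *ᵥ βWc ω) j
      = a j + ∑ k, A j k * ε ω k := by
    intro ω j
    have h1 : Wp *ᵥ y ω - (Wp * T) *ᵥ βWc ω = A *ᵥ y ω := by
      rw [hβWc, Matrix.mulVec_mulVec, Matrix.mulVec_mulVec, hA, hP,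
        Matrix.sub_mul, Matrix.one_mul, Matrix.sub_mulVec]
    have h2 : A *ᵥ y ω = a + A *ᵥ ε ω := by
      rw [hy, Matrix.mulVec_add, ha, hc]
    calc (Wp *ᵥ y ω) j - ((Wp * T) *ᵥ βWc ω) j
        = (Wp *ᵥ y ω - (Wp * T) *ᵥ βWc ω) j := by simp [Pi.sub_apply]
      _ = (A *ᵥ y ω) j := by rw [h1]
      _ = a j + (A *ᵥ ε ω) j := by rw [h2]; simp [Pi.add_apply]
      _ = a j + ∑ k, A j k * ε ω k := by
          simp [Matrix.mulVec, dotProduct]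
  have hRHS : ∀ j, (((1 : Matrix (Fin q) (Fin q) ℝ) - (Wp * T) * K)
      *ᵥ (Wp *ᵥ ((Matrix.fromCols W T) *ᵥ β))) j = a j := by
    intro j
    rw [Matrix.mulVec_mulVec]
  -- integral of sum
  have hint : ∫ ω, (∑ j, ((Wp *ᵥ y ω) j - ((Wp * T) *ᵥ βWc ω) j) ^ 2) ∂μ
      = ∑ j, (a j) ^ 2 + σ2 * tr := by
    have : ∫ ω, (∑ j, ((Wp *ᵥ y ω) j - ((Wp * T) *ᵥ βWc ω) j) ^ 2) ∂μ
        = ∫ ω, (∑ j, (a j + ∑ k, A j k * ε ω k) ^ 2) ∂μ := by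
      apply integral_congr_ae
      exact Filter.Eventually.of_forall fun ω => by simp only [hvec]
    rw [this, integral_finset_sum _ fun j _ => (key (a j) (A j)).1]
    have : ∀ j, ∫ ω, (a j + ∑ k, A j k * ε ω k) ^ 2 ∂μ
        = (a j) ^ 2 + σ2 * ∑ k, (A j k) ^ 2 := fun j => (key (a j) (A j)).2
    simp only [this]
    rw [Finset.sum_add_distrib, ← Finset.mul_sum, hS]
  -- conclude
  have hdiv : ∫ ω, (∑ j, ((Wp *ᵥ y ω) j - ((Wp * T) *ᵥ βWc ω) j) ^ 2) / tr ∂μ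
      = (∑ j, (a j) ^ 2 + σ2 * tr) / tr := by
    rw [integral_div, hint]
  rw [hdiv]
  simp only [Matrix.mulVec_mulVec, ← hA, ← ha]
  field_simp
  ring
end
end
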